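/- Let B₁, B₂ be d×d matrices with B₁B₂ = 0 = B₂B₁, k₁, k₂ nonzero scalars with k₁+k₂ ≠ 0, and ℓ₁, ℓ₂ scalars such that the relevant matrices are invertible. Define V = (B₁ B₂)·(I₂d + M²)⁻¹·col(ℓ₁I_d, ℓ₂I_d) with M = [[ℓ₁B₁/(2k₁), ℓ₁B₂/(k₁+k₂)],[ℓ₂B₁/(k₁+k₂), ℓ₂B₂/(2k₂)]]. Then V = ℓ₁B₁(I_d + ℓ₁²B₁²/(2k₁)²)⁻¹ + ℓ₂B₂(I_d + ℓ₂²B₂²/(2k₂)²)⁻¹, i.e. V is the linear superposition of the two one-soliton matrices. -/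

import Mathlib

open Matrix

theorem stmt_9 {d : ℕ} (B₁ B₂ : Matrix (Fin d) (Fin d) ℝ)
    (hB : B₁ * B₂ = 0) (hB' : B₂ * B₁ = 0)
    (k₁ k₂ ℓ₁ ℓ₂ : ℝ) (hk₁ : k₁ ≠ 0) (hk₂ : k₂ ≠ 0) (hk : k₁ + k₂ ≠ 0)
    (M : Matrix (Fin d ⊕ Fin d) (Fin d ⊕ Fin d) ℝ)
    (hM : M = fromBlocks ((ℓ₁/(2*k₁)) • B₁) ((ℓ₁/(k₁+k₂)) • B₂)
                          ((ℓ₂/(k₁+k₂)) • B₁) ((ℓ₂/(2*k₂)) • B₂))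
    (hMu : IsUnit (1 + M ^ 2))
    (h1 : IsUnit (1 + ((ℓ₁/(2*k₁))^2) • B₁ ^ 2))
    (h2 : IsUnit (1 + ((ℓ₂/(2*k₂))^2) • B₂ ^ 2))
    (V : Matrix (Fin d) (Fin d) ℝ)
    (hV : V = fromCols B₁ B₂ * (1 + M ^ 2)⁻¹ *
              fromRows (ℓ₁ • (1 : Matrix (Fin d) (Fin d) ℝ)) (ℓ₂ • 1)) :
    V = ℓ₁ • (B₁ * (1 + ((ℓ₁/(2*k₁))^2) • B₁ ^ 2)⁻¹) +
        ℓ₂ • (B₂ * (1 + ((ℓ₂/(2*k₂))^2) • B₂ ^ 2)⁻¹) := by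
  set a : ℝ := ℓ₁/(2*k₁) with ha
  set b : ℝ := ℓ₁/(k₁+k₂) with hb
  set c : ℝ := ℓ₂/(k₁+k₂) with hc
  set e : ℝ := ℓ₂/(2*k₂) with he
  set C₁ : Matrix (Fin d) (Fin d) ℝ := 1 + (a^2) • B₁ ^ 2 with hC₁
  set C₂ : Matrix (Fin d) (Fin d) ℝ := 1 + (e^2) • B₂ ^ 2 with hC₂
  set P₁ : Matrix (Fin d) (Fin d) ℝ := C₁⁻¹ with hP₁
  set P₂ : Matrix (Fin d) (Fin d) ℝ := C₂⁻¹ with hP₂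
  have hB1221 : B₁ ^ 2 * B₂ ^ 2 = 0 := by
    rw [pow_two, pow_two, mul_assoc, ← mul_assoc B₁ B₂, hB, zero_mul, mul_zero]
  have hB2112 : B₂ ^ 2 * B₁ ^ 2 = 0 := by
    rw [pow_two, pow_two, mul_assoc, ← mul_assoc B₂ B₁, hB', zero_mul, mul_zero]
  have hCP₁ : C₁ * P₁ = 1 := Matrix.mul_nonsing_inv _ (C₁.isUnit_iff_isUnit_det.mp h1)
  have hCP₂ : C₂ * P₂ = 1 := Matrix.mul_nonsing_inv _ (C₂.isUnit_iff_isUnit_det.mp h2)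
  set Y₁ : Matrix (Fin d) (Fin d) ℝ := ℓ₁ • P₁ - (b*e*ℓ₂) • (B₂ ^ 2 * P₂) with hY₁
  set Y₂ : Matrix (Fin d) (Fin d) ℝ := ℓ₂ • P₂ - (c*a*ℓ₁) • (B₁ ^ 2 * P₁) with hY₂
  have hM2 : M ^ 2 = fromBlocks ((a^2) • B₁ ^ 2) ((b*e) • B₂ ^ 2)
      ((c*a) • B₁ ^ 2) ((e^2) • B₂ ^ 2) := by
    rw [sq, hM, Matrix.fromBlocks_multiply]
    simp only [Matrix.smul_mul, Matrix.mul_smul, hB, hB', smul_smul, sq, smul_zero,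
      add_zero, zero_add, mul_zero, zero_mul]
    rw [mul_comm e b, mul_comm a c]
  have hA : (1 : Matrix (Fin d ⊕ Fin d) (Fin d ⊕ Fin d) ℝ) + M ^ 2 =
      fromBlocks C₁ ((b*e) • B₂ ^ 2) ((c*a) • B₁ ^ 2) C₂ := by
    rw [hM2, ← Matrix.fromBlocks_one, Matrix.fromBlocks_add]
    simp [hC₁, hC₂]
  have hC₁B₂ : C₁ * B₂ ^ 2 = B₂ ^ 2 := by
    rw [hC₁, add_mul, one_mul, Matrix.smul_mul, hB1221, smul_zero, add_zero]
  have hC₂B₁ : C₂ * B₁ ^ 2 = B₁ ^ 2 := by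
    rw [hC₂, add_mul, one_mul, Matrix.smul_mul, hB2112, smul_zero, add_zero]
  have row1 : C₁ * Y₁ + ((b*e) • B₂ ^ 2) * Y₂ = ℓ₁ • (1 : Matrix (Fin d) (Fin d) ℝ) := by
    simp only [hY₁, hY₂, Matrix.mul_sub, Matrix.mul_smul, Matrix.smul_mul, ← mul_assoc,
      hCP₁, hC₁B₂, hB2112, zero_mul, mul_zero, smul_zero, sub_zero]
    module
  have row2 : ((c*a) • B₁ ^ 2) * Y₁ + C₂ * Y₂ = ℓ₂ • (1 : Matrix (Fin d) (Fin d) ℝ) := by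
    simp only [hY₁, hY₂, Matrix.mul_sub, Matrix.mul_smul, Matrix.smul_mul, ← mul_assoc,
      hCP₂, hC₂B₁, hB1221, zero_mul, mul_zero, smul_zero, sub_zero]
    module
  have key : (1 + M ^ 2) * fromRows Y₁ Y₂ =
      fromRows (ℓ₁ • (1 : Matrix (Fin d) (Fin d) ℝ)) (ℓ₂ • 1) := by
    rw [hA, Matrix.fromBlocks_mul_fromRows, row1, row2]
  have hinv : (1 + M ^ 2)⁻¹ * fromRows (ℓ₁ • (1 : Matrix (Fin d) (Fin d) ℝ)) (ℓ₂ • 1) =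
      fromRows Y₁ Y₂ := by
    erw [← key, ← Matrix.mul_assoc (1 + M ^ 2)⁻¹,
      Matrix.nonsing_inv_mul _ ((1 + M ^ 2).isUnit_iff_isUnit_det.mp hMu), Matrix.one_mul]
  erw [hV, Matrix.mul_assoc, hinv, Matrix.fromCols_mul_fromRows]
  have h12 : B₁ * B₂ ^ 2 = 0 := by rw [pow_two, ← mul_assoc, hB, zero_mul]
  have h21 : B₂ * B₁ ^ 2 = 0 := by rw [pow_two, ← mul_assoc, hB', zero_mul]
  simp only [hY₁, hY₂, Matrix.mul_sub, Matrix.mul_smul, ← mul_assoc, h12, h21,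
    zero_mul, smul_zero, sub_zero]
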